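/- In the planar Kepler problem with ℓ ≠ 0 and energy E < 0, for every point r on the orbit, |r| + |I - r| = k/(-E), where I = A/E and A is the LRL vector. Hence the orbit lies on an ellipse with foci 0 and I and major axis k/(-E). -/

import Mathlib

/-- Kepler first law for elliptic orbits: if `E < 0` and `ℓ ≠ 0`, every point `r`
of the orbit satisfies `‖r‖ + ‖I - r‖ = k/(-E)` where `I = A/E`; thus the orbit
lies on an ellipse with foci `0` and `I` and major axis `k/(-E)`. -/
theorem elliptic_orbit (k : ℝ) (r p : EuclideanSpace ℝ (Fin 2)) (hr : r ≠ 0)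
    (ℓ : ℝ) (hℓdef : ℓ = r 0 * p 1 - r 1 * p 0) (hℓ : ℓ ≠ 0)
    (E : ℝ) (hE : E = ‖p‖ ^ 2 / 2 - k / ‖r‖) (hEneg : E < 0)
    (A : EuclideanSpace ℝ (Fin 2))
    (hA : A = ‖p‖ ^ 2 • r - (inner ℝ r p : ℝ) • p - (k / ‖r‖) • r)
    (I : EuclideanSpace ℝ (Fin 2)) (hI : I = E⁻¹ • A) :
    ‖r‖ + ‖I - r‖ = k / (-E) := by
  have hX0 : (0:ℝ) < ‖r‖ := norm_pos_iff.mpr hr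
  have hXne : (‖r‖:ℝ) ≠ 0 := ne_of_gt hX0
  have hEne : E ≠ 0 := ne_of_lt hEneg
  set X := ‖r‖ with hXdef
  set s : ℝ := inner ℝ r p with hs
  -- coordinate facts
  have hrc : X ^ 2 = r 0 ^ 2 + r 1 ^ 2 := by
    have h := real_inner_self_eq_norm_sq r
    rw [PiLp.inner_apply, Fin.sum_univ_two] at h
    simp only [RCLike.inner_apply, conj_trivial] at h
    rw [hXdef, ← h]; ring
  have hpc : ‖p‖ ^ 2 = p 0 ^ 2 + p 1 ^ 2 := by
    have h := real_inner_self_eq_norm_sq p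
    rw [PiLp.inner_apply, Fin.sum_univ_two] at h
    simp only [RCLike.inner_apply, conj_trivial] at h
    rw [← h]; ring
  have hsc : s = r 0 * p 0 + r 1 * p 1 := by
    rw [hs]
    simp [PiLp.inner_apply, Fin.sum_univ_two, RCLike.inner_apply]
    ring
  -- Lagrange identity in the plane
  have hL : X ^ 2 * ‖p‖ ^ 2 - s ^ 2 = ℓ ^ 2 := by
    rw [hrc, hpc, hsc, hℓdef]; ring
  have hX2 : X ^ 2 = (inner ℝ r r : ℝ) := (real_inner_self_eq_norm_sq r).symm
  have hP2 : ‖p‖ ^ 2 = (inner ℝ p p : ℝ) := (real_inner_self_eq_norm_sq p).symm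
  have hpr : (inner ℝ p r : ℝ) = s := by rw [hs]; exact (real_inner_comm p r).symm
  have hrp : (inner ℝ r p : ℝ) = s := hs.symm
  -- A ⬝ r
  have hAr : (inner ℝ A r : ℝ) = ‖p‖ ^ 2 * X ^ 2 - s ^ 2 - k * X := by
    rw [hA]
    simp only [inner_sub_left, real_inner_smul_left, hpr, hrp, ← hX2]
    field_simp
  -- ‖A‖² = k² + 2 E ℓ²
  have hAA : (inner ℝ A A : ℝ) = k ^ 2 + 2 * E * ℓ ^ 2 := by
    rw [← hL, hE, hA]
    simp only [inner_sub_left, inner_sub_right, real_inner_smul_left, real_inner_smul_right,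
      hpr, hrp, ← hX2, ← hP2]
    field_simp
    ring
  -- the focal distance
  have hIr : ‖I - r‖ ^ 2 = (k / E + X) ^ 2 := by
    have hexp : ‖I - r‖ ^ 2 = ‖I‖ ^ 2 - 2 * (inner ℝ I r : ℝ) + ‖r‖ ^ 2 :=
      norm_sub_sq_real I r
    have hII : ‖I‖ ^ 2 = E⁻¹ * (E⁻¹ * (inner ℝ A A : ℝ)) := by
      rw [← real_inner_self_eq_norm_sq, hI, real_inner_smul_left, real_inner_smul_right]
    have hIr2 : (inner ℝ I r : ℝ) = E⁻¹ * (inner ℝ A r : ℝ) := by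
      rw [hI, real_inner_smul_left]
    rw [hexp, hII, hIr2, hAA, hAr, ← hXdef, ← hL]
    field_simp
    ring
  -- sign analysis: k/E + X ≤ 0
  have hsign : k / E + X ≤ 0 := by
    have hpX : 0 ≤ ‖p‖ ^ 2 * X := by positivity
    have hkEX : 0 ≤ k + E * X := by
      have : k + E * X = ‖p‖ ^ 2 / 2 * X := by
        rw [hE]; field_simp; ring
      nlinarith
    have : k / E + X = (k + E * X) / E := by field_simp
    rw [this]
    exact div_nonpos_of_nonneg_of_nonpos hkEX (le_of_lt hEneg)
  have hnorm : ‖I - r‖ = -(k / E + X) := by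
    have : ‖I - r‖ = |k / E + X| := by
      rw [← Real.sqrt_sq_eq_abs, ← hIr, Real.sqrt_sq (norm_nonneg _)]
    rw [this, abs_of_nonpos hsign]
  rw [hnorm, div_neg]
  ring
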